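/- arXiv:2407.04409 — 2 statements merged into one kernel-verified Lean document; each statement's English description precedes it below -/
import Mathlib

section
/- For every real number t, the exponential generating function of the Lucas-Fubini numbers satisfies Σ_{n=0}^{∞} 𝓛_n · t^n/n! = α · e^{(e^t − 1)α} + β · e^{(e^t − 1)β}, where α = (1+√5)/2 and β = (1−√5)/2; in particular the series on the left converges to this value. -/
/-- Stirling numbers of the second kind. -/
def stirling2 : ℕ → ℕ → ℕ
  | 0, 0 => 1
  | 0, _ + 1 => 0
  | _ + 1, 0 => 0
  | n + 1, k + 1 => stirling2 n k + (k + 1) * stirling2 n (k + 1)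

/-- Lucas numbers. -/
def lucas : ℕ → ℕ
  | 0 => 2
  | 1 => 1
  | n + 2 => lucas n + lucas (n + 1)

/-- Lucas-Fubini numbers. -/
def lucasFubini (n : ℕ) : ℕ :=
  ∑ k ∈ Finset.range (n + 1), lucas (k + 1) * stirling2 n k


lemma stirling2_eq_zero : ∀ {n k : ℕ}, n < k → stirling2 n k = 0
  | 0, _ + 1, _ => rfl
  | n + 1, k + 1, h => by
    rw [stirling2, stirling2_eq_zero (by omega : n < k),
      stirling2_eq_zero (by omega : n < k + 1)]
    simp

lemma mul_choose_eq (m k : ℕ) :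
    m * m.choose k = (k + 1) * m.choose (k + 1) + k * m.choose k := by
  rcases le_or_gt k m with h | h
  · have h1 : m.choose (k + 1) * (k + 1) = m.choose k * (m - k) :=
      Nat.choose_succ_right_eq m k
    have h2 : m - k + k = m := Nat.sub_add_cancel h
    calc m * m.choose k = m.choose k * (m - k + k) := by rw [h2, Nat.mul_comm]
      _ = m.choose k * (m - k) + k * m.choose k := by ring
      _ = (k + 1) * m.choose (k + 1) + k * m.choose k := by rw [← h1]; ring
  · rw [Nat.choose_eq_zero_of_lt h, Nat.choose_eq_zero_of_lt (by omega)]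
    ring

lemma pow_eq_sum_stirling (m : ℕ) : ∀ n : ℕ,
    m ^ n = ∑ k ∈ Finset.range (n + 1), stirling2 n k * k.factorial * m.choose k := by
  intro n
  induction n with
  | zero => simp [stirling2]
  | succ n ih =>
    set A : ℕ → ℕ := fun k => stirling2 n k * (k+1).factorial * m.choose (k+1) with hA
    set B : ℕ → ℕ := fun k => (k+1) * stirling2 n (k+1) * (k+1).factorial * m.choose (k+1)
      with hB
    set D : ℕ → ℕ := fun k => stirling2 n k * k.factorial * (k * m.choose k) with hD
    set g : ℕ → ℕ := fun k => stirling2 (n+1) k * k.factorial * m.choose k with hg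
    have step : m ^ (n + 1) = ∑ k ∈ Finset.range (n + 1), (A k + D k) := by
      rw [pow_succ, ih, Finset.sum_mul]
      refine Finset.sum_congr rfl fun k _ => ?_
      calc stirling2 n k * k.factorial * m.choose k * m
          = stirling2 n k * k.factorial * (m * m.choose k) := by ring
        _ = stirling2 n k * k.factorial * ((k+1) * m.choose (k+1) + k * m.choose k) := by
            rw [mul_choose_eq]
        _ = A k + D k := by simp only [hA, hD, Nat.factorial_succ]; ring
    have hBD : ∑ k ∈ Finset.range (n + 1), B k = ∑ k ∈ Finset.range (n + 1), D k := by
      rw [Finset.sum_range_succ' D n, Finset.sum_range_succ B]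
      have : B n = 0 := by
        simp only [hB, stirling2_eq_zero (Nat.lt_succ_self n)]; ring
      rw [this, Nat.add_zero]
      have : D 0 = 0 := by simp [hD]
      rw [this, Nat.add_zero]
      refine Finset.sum_congr rfl fun k _ => ?_
      simp only [hB, hD, Nat.factorial_succ]; ring
    have hT : ∑ k ∈ Finset.range (n + 2), g k = ∑ k ∈ Finset.range (n + 1), (A k + B k) := by
      rw [Finset.sum_range_succ' g (n+1)]
      have : g 0 = 0 := by simp [hg, stirling2]
      rw [this, Nat.add_zero]
      refine Finset.sum_congr rfl fun k _ => ?_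
      simp only [hg, hA, hB, stirling2]; ring
    rw [step, hT, Finset.sum_add_distrib, Finset.sum_add_distrib, hBD]

lemma hasSum_exp_real (x : ℝ) :
    HasSum (fun n : ℕ => x ^ n / n.factorial) (Real.exp x) := by
  rw [Real.exp_eq_exp_ℝ]
  exact NormedSpace.expSeries_div_hasSum_exp x

lemma hasSum_choose_mul (k : ℕ) (x : ℝ) :
    HasSum (fun m : ℕ => (m.choose k : ℝ) * x ^ m / m.factorial)
      (x ^ k * Real.exp x / k.factorial) := by
  have h := (hasSum_exp_real x).mul_left (x ^ k / k.factorial)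
  have heq : (fun j : ℕ => x ^ k / k.factorial * (x ^ j / j.factorial))
      = fun j : ℕ => (((j + k).choose k : ℝ)) * x ^ (j + k) / (j + k).factorial := by
    funext j
    rw [Nat.cast_choose ℝ (Nat.le_add_left k j)]
    have h1 : (k.factorial : ℝ) ≠ 0 := by positivity
    have h2 : (j.factorial : ℝ) ≠ 0 := by positivity
    have h3 : ((j + k).factorial : ℝ) ≠ 0 := by positivity
    have h4 : j + k - k = j := by omega
    rw [h4, pow_add]
    field_simp
  rw [heq] at h
  have h2 := (hasSum_nat_add_iff
    (f := fun m : ℕ => (m.choose k : ℝ) * x ^ m / m.factorial) k).mp h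
  have hz : ∑ i ∈ Finset.range k, ((i.choose k : ℝ) * x ^ i / i.factorial) = 0 := by
    refine Finset.sum_eq_zero fun i hi => ?_
    rw [Nat.choose_eq_zero_of_lt (Finset.mem_range.mp hi)]
    simp
  rw [hz, add_zero] at h2
  rwa [div_mul_eq_mul_div] at h2

/-- Bell polynomials (real). -/
noncomputable def bellPoly (n : ℕ) (x : ℝ) : ℝ :=
  ∑ k ∈ Finset.range (n + 1), (stirling2 n k : ℝ) * x ^ k

lemma hasSum_pow_mul (n : ℕ) (x : ℝ) :
    HasSum (fun m : ℕ => (m : ℝ) ^ n * x ^ m / m.factorial)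
      (Real.exp x * bellPoly n x) := by
  have h := hasSum_sum (s := Finset.range (n + 1))
    (f := fun k (m : ℕ) =>
      (stirling2 n k * k.factorial : ℝ) * ((m.choose k : ℝ) * x ^ m / m.factorial))
    (a := fun k => (stirling2 n k * k.factorial : ℝ) * (x ^ k * Real.exp x / k.factorial))
    (fun k _ => (hasSum_choose_mul k x).mul_left _)
  have heq : (fun m : ℕ => ∑ k ∈ Finset.range (n + 1),
      (stirling2 n k * k.factorial : ℝ) * ((m.choose k : ℝ) * x ^ m / m.factorial))
      = fun m : ℕ => (m : ℝ) ^ n * x ^ m / m.factorial := by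
    funext m
    have hcast : ((m : ℝ)) ^ n
        = ∑ k ∈ Finset.range (n + 1), (stirling2 n k * k.factorial * m.choose k : ℝ) := by
      exact_mod_cast congrArg (Nat.cast : ℕ → ℝ) (pow_eq_sum_stirling m n)
    rw [hcast, Finset.sum_mul, Finset.sum_div]
    refine Finset.sum_congr rfl fun k _ => ?_
    ring
  have hval : ∑ k ∈ Finset.range (n + 1),
      (stirling2 n k * k.factorial : ℝ) * (x ^ k * Real.exp x / k.factorial)
      = Real.exp x * bellPoly n x := by
    rw [bellPoly, Finset.mul_sum]
    refine Finset.sum_congr rfl fun k _ => ?_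
    have hk : (k.factorial : ℝ) ≠ 0 := by positivity
    field_simp
  rw [heq, hval] at h
  exact h

lemma hasSum_bell_egf (x t : ℝ) :
    HasSum (fun n : ℕ => bellPoly n x * t ^ n / n.factorial)
      (Real.exp ((Real.exp t - 1) * x)) := by
  set F : ℕ × ℕ → ℝ :=
    fun p => x ^ p.1 / p.1.factorial * (((p.1 : ℝ) * t) ^ p.2 / p.2.factorial) with hF
  have habs : Summable fun p : ℕ × ℕ => |F p| := by
    rw [summable_prod_of_nonneg (fun p => abs_nonneg _)]
    have hfib : ∀ m : ℕ, HasSum (fun n => |F (m, n)|)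
        (|x| ^ m / m.factorial * Real.exp ((m : ℝ) * |t|)) := by
      intro m
      have h := (hasSum_exp_real ((m : ℝ) * |t|)).mul_left (|x| ^ m / m.factorial)
      have heq : (fun n : ℕ => |x| ^ m / m.factorial * (((m : ℝ) * |t|) ^ n / n.factorial))
          = fun n : ℕ => |F (m, n)| := by
        funext n
        simp only [hF, abs_mul, abs_div, abs_pow, Nat.abs_cast]
      rwa [heq] at h
    refine ⟨fun m => (hfib m).summable, ?_⟩
    have hsum : (fun m : ℕ => ∑' n, |F (m, n)|)
        = fun m : ℕ => (|x| * Real.exp |t|) ^ m / m.factorial := by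
      funext m
      rw [(hfib m).tsum_eq, Real.exp_nat_mul, mul_pow]
      ring
    rw [hsum]
    exact (hasSum_exp_real (|x| * Real.exp |t|)).summable
  have hFsummable : Summable F := habs.of_abs
  obtain ⟨S, hFsum⟩ := hFsummable
  -- compute S by summing over m first
  have hfib : ∀ m : ℕ, HasSum (fun n => F (m, n))
      (x ^ m / m.factorial * Real.exp ((m : ℝ) * t)) := fun m =>
    (hasSum_exp_real ((m : ℝ) * t)).mul_left (x ^ m / m.factorial)
  have hS1 : HasSum (fun m : ℕ => x ^ m / m.factorial * Real.exp ((m : ℝ) * t)) S :=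
    hFsum.prod_fiberwise hfib
  have hS2 : HasSum (fun m : ℕ => x ^ m / m.factorial * Real.exp ((m : ℝ) * t))
      (Real.exp (x * Real.exp t)) := by
    have h := hasSum_exp_real (x * Real.exp t)
    have heq : (fun m : ℕ => (x * Real.exp t) ^ m / m.factorial)
        = fun m : ℕ => x ^ m / m.factorial * Real.exp ((m : ℝ) * t) := by
      funext m
      rw [Real.exp_nat_mul, mul_pow]
      ring
    rwa [heq] at h
  have hSval : S = Real.exp (x * Real.exp t) := hS1.unique hS2
  -- sum over n first
  have hswap : HasSum (fun q : ℕ × ℕ => F (q.2, q.1)) S :=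
    (Equiv.prodComm ℕ ℕ).hasSum_iff.mpr hFsum
  have hfib2 : ∀ n : ℕ, HasSum (fun m => F (m, n))
      (t ^ n / n.factorial * (Real.exp x * bellPoly n x)) := by
    intro n
    have h := (hasSum_pow_mul n x).mul_left (t ^ n / n.factorial)
    have heq : (fun m : ℕ => t ^ n / n.factorial * ((m : ℝ) ^ n * x ^ m / m.factorial))
        = fun m : ℕ => F (m, n) := by
      funext m
      simp only [hF, mul_pow]
      ring
    rwa [heq] at h
  have hS3 : HasSum (fun n : ℕ => t ^ n / n.factorial * (Real.exp x * bellPoly n x)) S :=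
    hswap.prod_fiberwise hfib2
  have h4 := hS3.mul_left (Real.exp (-x))
  have heq : (fun n : ℕ => Real.exp (-x) * (t ^ n / n.factorial * (Real.exp x * bellPoly n x)))
      = fun n : ℕ => bellPoly n x * t ^ n / n.factorial := by
    funext n
    have : Real.exp (-x) * Real.exp x = 1 := by
      rw [← Real.exp_add]; simp
    calc Real.exp (-x) * (t ^ n / n.factorial * (Real.exp x * bellPoly n x))
        = Real.exp (-x) * Real.exp x * (bellPoly n x * t ^ n / n.factorial) := by ring
      _ = bellPoly n x * t ^ n / n.factorial := by rw [this, one_mul]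
  rw [heq, hSval, ← Real.exp_add] at h4
  have : -x + x * Real.exp t = (Real.exp t - 1) * x := by ring
  rwa [this] at h4


lemma sqrt5_sq : Real.sqrt 5 ^ 2 = 5 := Real.sq_sqrt (by norm_num)

lemma golden_sq : ((1 + Real.sqrt 5) / 2) ^ 2 = (1 + Real.sqrt 5) / 2 + 1 := by
  have := sqrt5_sq; nlinarith

lemma golden_conj_sq : ((1 - Real.sqrt 5) / 2) ^ 2 = (1 - Real.sqrt 5) / 2 + 1 := by
  have := sqrt5_sq; nlinarith

lemma lucas_real : ∀ n : ℕ,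
    (lucas n : ℝ) = ((1 + Real.sqrt 5) / 2) ^ n + ((1 - Real.sqrt 5) / 2) ^ n
  | 0 => by norm_num [lucas]
  | 1 => by norm_num [lucas]
  | n + 2 => by
    have h1 := lucas_real n
    have h2 := lucas_real (n + 1)
    have ha : ((1 + Real.sqrt 5) / 2) ^ (n + 2)
        = ((1 + Real.sqrt 5) / 2) ^ (n + 1) + ((1 + Real.sqrt 5) / 2) ^ n := by
      calc ((1 + Real.sqrt 5) / 2) ^ (n + 2)
          = ((1 + Real.sqrt 5) / 2) ^ n * ((1 + Real.sqrt 5) / 2) ^ 2 := by ring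
        _ = _ := by rw [golden_sq]; ring
    have hb : ((1 - Real.sqrt 5) / 2) ^ (n + 2)
        = ((1 - Real.sqrt 5) / 2) ^ (n + 1) + ((1 - Real.sqrt 5) / 2) ^ n := by
      calc ((1 - Real.sqrt 5) / 2) ^ (n + 2)
          = ((1 - Real.sqrt 5) / 2) ^ n * ((1 - Real.sqrt 5) / 2) ^ 2 := by ring
        _ = _ := by rw [golden_conj_sq]; ring
    have : (lucas (n + 2) : ℝ) = (lucas n : ℝ) + (lucas (n + 1) : ℝ) := by
      rw [lucas]; push_cast; ring
    rw [this, h1, h2, ha, hb]; ring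


open Real in
/-- Exponential generating function of the Lucas-Fubini numbers. -/
theorem lucasFubini_egf (t : ℝ) :
    HasSum (fun n : ℕ => (lucasFubini n : ℝ) * t ^ n / (n.factorial : ℝ))
      (((1 + Real.sqrt 5) / 2) * Real.exp ((Real.exp t - 1) * ((1 + Real.sqrt 5) / 2)) +
        ((1 - Real.sqrt 5) / 2) * Real.exp ((Real.exp t - 1) * ((1 - Real.sqrt 5) / 2))) := by
  set a : ℝ := (1 + Real.sqrt 5) / 2
  set b : ℝ := (1 - Real.sqrt 5) / 2
  have hA := (hasSum_bell_egf a t).mul_left a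
  have hB := (hasSum_bell_egf b t).mul_left b
  have h := hA.add hB
  have heq : (fun n : ℕ => a * (bellPoly n a * t ^ n / n.factorial)
      + b * (bellPoly n b * t ^ n / n.factorial))
      = fun n : ℕ => (lucasFubini n : ℝ) * t ^ n / n.factorial := by
    funext n
    have hlf : (lucasFubini n : ℝ) = a * bellPoly n a + b * bellPoly n b := by
      rw [lucasFubini, bellPoly, bellPoly, Finset.mul_sum, Finset.mul_sum,
        ← Finset.sum_add_distrib]
      push_cast
      refine Finset.sum_congr rfl fun k _ => ?_
      rw [lucas_real (k + 1)]
      ring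
    rw [hlf]
    ring
  rwa [heq] at h
end

section
/- For all n ≥ 3, the right-down diagonal d_n^{(3)} = F_{n−1} · S(n, n−2) of the Fibonacci-Fubini triangle equals p_3(n)·α^{n−1} − p_3(n)·β^{n−1}, where p_3(n) = (1/(24√5))·(3n−5)·(n−2)·(n−1)·n, α = (1+√5)/2 and β = (1−√5)/2. -/
lemma stirling2_zero_of_lt : ∀ n k, n < k → stirling2 n k = 0
  | 0, k + 1, _ => rfl
  | n + 1, k + 1, h => by
    have h1 := stirling2_zero_of_lt n k (by omega)
    have h2 := stirling2_zero_of_lt n (k + 1) (by omega)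
    simp [stirling2, h1, h2]

lemma stirling2_self : ∀ n, stirling2 n n = 1
  | 0 => rfl
  | n + 1 => by
    simp [stirling2, stirling2_self n, stirling2_zero_of_lt n (n + 1) (by omega)]

lemma stirling2_succ (m : ℕ) : 2 * stirling2 (m + 2) (m + 1) = (m + 2) * (m + 1) := by
  induction m with
  | zero => rfl
  | succ k ih =>
    have : stirling2 (k + 3) (k + 2) = stirling2 (k + 2) (k + 1) + (k + 2) * stirling2 (k + 2) (k + 2) := rfl
    rw [this, stirling2_self]
    nlinarith [ih]

lemma stirling2_two (m : ℕ) :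
    24 * stirling2 (m + 3) (m + 1) = (m + 3) * (m + 2) * (m + 1) * (3 * m + 4) := by
  induction m with
  | zero => rfl
  | succ k ih =>
    have h1 : stirling2 (k + 4) (k + 2) =
        stirling2 (k + 3) (k + 1) + (k + 2) * stirling2 (k + 3) (k + 2) := rfl
    have h2 := stirling2_succ (k + 1)
    nlinarith [ih, h2]

open Real in
/-- The third right-down diagonal of the Fibonacci-Fubini triangle:
`d_n^{(3)} = F_{n-1}·S(n,n-2) = p₃(n)·α^{n-1} − p₃(n)·β^{n-1}` with
`p₃(n) = (1/(24√5))(3n-5)(n-2)(n-1)n`. -/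
theorem fibFubiniD_three (n : ℕ) (hn : 3 ≤ n) :
    (Nat.fib (n - 1) * stirling2 n (n - 2) : ℝ) =
      (1 / (24 * Real.sqrt 5) * (3 * (n : ℝ) - 5) * ((n : ℝ) - 2) * ((n : ℝ) - 1) * n) *
          ((1 + Real.sqrt 5) / 2) ^ (n - 1) -
        (1 / (24 * Real.sqrt 5) * (3 * (n : ℝ) - 5) * ((n : ℝ) - 2) * ((n : ℝ) - 1) * n) *
          ((1 - Real.sqrt 5) / 2) ^ (n - 1) := by
  obtain ⟨m, rfl⟩ : ∃ m, n = m + 3 := ⟨n - 3, by omega⟩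
  have h1 : m + 3 - 1 = m + 2 := rfl
  have h2 : m + 3 - 2 = m + 1 := rfl
  rw [h1, h2]
  have hst : (stirling2 (m + 3) (m + 1) : ℝ) =
      ((m : ℝ) + 3) * ((m : ℝ) + 2) * ((m : ℝ) + 1) * (3 * (m : ℝ) + 4) / 24 := by
    have := stirling2_two m
    have : (24 : ℝ) * stirling2 (m + 3) (m + 1) =
        ((m : ℝ) + 3) * ((m : ℝ) + 2) * ((m : ℝ) + 1) * (3 * (m : ℝ) + 4) := by
      exact_mod_cast congrArg (Nat.cast : ℕ → ℝ) this
    linarith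
  have hfib := Real.coe_fib_eq (m + 2)
  have hs : Real.sqrt 5 ≠ 0 := by positivity
  rw [hfib, hst]
  push_cast
  field_simp
  ring
end
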